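/- For t ∈ ℝ, let v(t) be the 4×4 complex matrix v(t) = [[i,0,0,t],[0,-i,-t,0],[0,t,-3i,0],[-t,0,0,3i]]. Then for every t with 0 < |t| < 1, every real number c, and every invertible 4×4 complex matrix P, one has P·v(t)·P⁻¹ ≠ c·v(0). In other words, for such t the matrix v(t) is not similar to any real scalar multiple of v(0) = diag(i,-i,-3i,3i). -/
import Mathlib


open Matrix Complex

/-- For `t : ℝ`, let `v t = [[i,0,0,t],[0,-i,-t,0],[0,t,-3i,0],[-t,0,0,3i]]`.
For every `t` with `0 < |t| < 1`, every real `c` and every invertible complex `4×4`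
matrix `P`, one has `P * v t * P⁻¹ ≠ c • v 0`: the matrix `v t` is not similar to any
real scalar multiple of `v 0 = diag(i,-i,-3i,3i)`. -/
theorem sp2_family_not_conjugate
    (v : ℝ → Matrix (Fin 4) (Fin 4) ℂ)
    (hv : ∀ t : ℝ, v t =
      !![I, 0, 0, (t : ℂ);
         0, -I, -(t : ℂ), 0;
         0, (t : ℂ), -3 * I, 0;
         -(t : ℂ), 0, 0, 3 * I]) :
    ∀ t : ℝ, 0 < |t| → |t| < 1 → ∀ c : ℝ, ∀ P : Matrix (Fin 4) (Fin 4) ℂ,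
      IsUnit P → P * v t * P⁻¹ ≠ c • v 0 := by
  intro t ht0 ht1 c P hP h
  have hdet : IsUnit P.det := (Matrix.isUnit_iff_isUnit_det P).mp hP
  have hPinv : P⁻¹ * P = 1 := Matrix.nonsing_inv_mul P hdet
  set A := v t with hA
  -- conjugation preserves traces of powers
  have hsq : (P * A * P⁻¹) * (P * A * P⁻¹) = P * (A * A) * P⁻¹ := by
    calc (P * A * P⁻¹) * (P * A * P⁻¹) = P * A * (P⁻¹ * P) * A * P⁻¹ := by
          noncomm_ring
      _ = P * (A * A) * P⁻¹ := by rw [hPinv]; noncomm_ring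
  have hconj : ∀ B : Matrix (Fin 4) (Fin 4) ℂ,
      Matrix.trace (P * B * P⁻¹) = Matrix.trace B := by
    intro B
    rw [Matrix.trace_mul_cycle, hPinv, Matrix.one_mul]
  -- trace of squares
  have e2 : Matrix.trace (A * A) = Matrix.trace ((c • v 0) * (c • v 0)) := by
    rw [← hconj (A * A), ← hsq, h]
  -- trace of fourth powers
  have hq : (P * A * P⁻¹) * (P * A * P⁻¹) * ((P * A * P⁻¹) * (P * A * P⁻¹))
      = P * (A * A * (A * A)) * P⁻¹ := by
    rw [hsq]
    calc P * (A * A) * P⁻¹ * (P * (A * A) * P⁻¹)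
        = P * (A * A) * (P⁻¹ * P) * (A * A) * P⁻¹ := by noncomm_ring
      _ = P * (A * A * (A * A)) * P⁻¹ := by rw [hPinv]; noncomm_ring
  have e4 : Matrix.trace (A * A * (A * A)) =
      Matrix.trace ((c • v 0) * (c • v 0) * ((c • v 0) * (c • v 0))) := by
    rw [← hconj (A * A * (A * A)), ← hq, h]
  -- compute all traces explicitly
  rw [hA, hv t] at e2 e4
  rw [hv 0] at e2 e4
  have key2 : (-20 - 4*(t:ℂ)^2 : ℂ) = -20 * (c:ℂ)^2 := by
    rw [show ((0:ℝ):ℂ) = 0 from rfl] at e2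
    simp only [Matrix.smul_mul, Matrix.mul_smul, Matrix.trace_smul] at e2
    rw [show (-20 - 4*(t:ℂ)^2 : ℂ) = Matrix.trace
      ((!![I, 0, 0, (t : ℂ); 0, -I, -(t : ℂ), 0; 0, (t : ℂ), -3 * I, 0;
         -(t : ℂ), 0, 0, 3 * I]) * (!![I, 0, 0, (t : ℂ);
         0, -I, -(t : ℂ), 0; 0, (t : ℂ), -3 * I, 0;
         -(t : ℂ), 0, 0, 3 * I])) from ?_, e2]
    · simp [Matrix.trace, Matrix.diag, Fin.sum_univ_four, Matrix.mul_apply]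
      ring_nf
      simp [Complex.I_sq]
      ring
    · simp [Matrix.trace, Matrix.diag, Fin.sum_univ_four, Matrix.mul_apply]
      ring_nf
      simp [Complex.I_sq]
      ring
  have key4 : (164 + 104*(t:ℂ)^2 + 4*(t:ℂ)^4 : ℂ) = 164 * (c:ℂ)^4 := by
    rw [show ((0:ℝ):ℂ) = 0 from rfl] at e4
    simp only [Matrix.smul_mul, Matrix.mul_smul, Matrix.trace_smul, smul_smul] at e4
    rw [show (164 + 104*(t:ℂ)^2 + 4*(t:ℂ)^4 : ℂ) = Matrix.trace
      ((!![I, 0, 0, (t : ℂ); 0, -I, -(t : ℂ), 0; 0, (t : ℂ), -3 * I, 0;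
         -(t : ℂ), 0, 0, 3 * I]) * (!![I, 0, 0, (t : ℂ);
         0, -I, -(t : ℂ), 0; 0, (t : ℂ), -3 * I, 0;
         -(t : ℂ), 0, 0, 3 * I]) * ((!![I, 0, 0, (t : ℂ); 0, -I, -(t : ℂ), 0;
         0, (t : ℂ), -3 * I, 0; -(t : ℂ), 0, 0, 3 * I]) * (!![I, 0, 0, (t : ℂ);
         0, -I, -(t : ℂ), 0; 0, (t : ℂ), -3 * I, 0;
         -(t : ℂ), 0, 0, 3 * I]))) from ?_, e4]
    · simp [Matrix.trace, Matrix.diag, Fin.sum_univ_four, Matrix.mul_apply]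
      ring_nf
      simp [Complex.I_sq]
      ring
    · simp [Matrix.trace, Matrix.diag, Fin.sum_univ_four, Matrix.mul_apply]
      ring_nf
      simp [Complex.I_sq]
      ring
  -- pass to real equations
  have r2 : (-20 - 4*t^2 : ℝ) = -20 * c^2 := by exact_mod_cast key2
  have r4 : (164 + 104*t^2 + 4*t^4 : ℝ) = 164 * c^4 := by exact_mod_cast key4
  have htne : t ≠ 0 := by
    intro h0; rw [h0] at ht0; simp at ht0
  have ht2 : 0 < t^2 := by positivity
  have ht2' : t^2 < 1 := by
    have := abs_lt.mp ht1
    nlinarith [_root_.sq_abs t, abs_nonneg t]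
  -- c^2 = 1 + t^2/5, then 164 c^4 = 164 + 104 t^2 + 4 t^4 forces t^2 = 15
  have hc2 : c^2 = 1 + t^2/5 := by linarith
  nlinarith [hc2, r4, sq_nonneg t, ht2, ht2', sq_nonneg (t^2)]
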